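/- Let X be exponentially distributed with rate λ > 0 (cdf F(x) = 1 − e^{−λx}, x > 0) and w(x) = x^m with m > 0. Then the general weighted cumulative residual extropy of the one-cycle minRSSU sample of size n equals -(1/2)·(Γ(m+1)/(2λ)^{m+1})^n · (1/n!)^{m+1}. -/

import Mathlib

open MeasureTheory Finset

/-- For `X` exponential with rate `λ > 0` (survival function `F̄(x) = e^{-λx}`) and weight
`w(x) = x^m`, `m > 0`, the GWCRJ of the one-cycle minRSSU sample of size `n`,
`-(1/2)∏_{i=1}^n ∫₀^∞ x^m (e^{-λx})^{2i} dx`, equals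
`-(1/2)·(Γ(m+1)/(2λ)^{m+1})^n · (1/n!)^{m+1}`. -/
theorem stmt8 (lam m : ℝ) (hlam : 0 < lam) (hm : 0 < m) (n : ℕ) :
    -(1/2) * ∏ i ∈ Finset.Icc 1 n,
        ∫ x in Set.Ioi (0:ℝ), x ^ m * (Real.exp (-(lam * x))) ^ (2 * i)
      = -(1/2) * (Real.Gamma (m + 1) / (2 * lam) ^ (m + 1)) ^ n *
          (1 / (n.factorial : ℝ)) ^ (m + 1) := by
  have key : ∀ i ∈ Finset.Icc 1 n,
      (∫ x in Set.Ioi (0:ℝ), x ^ m * (Real.exp (-(lam * x))) ^ (2 * i))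
      = (1 / (2 * (i:ℝ) * lam)) ^ (m+1) * Real.Gamma (m+1) := by
    intro i hi
    have hi1 : (1:ℝ) ≤ (i:ℝ) := by exact_mod_cast (Finset.mem_Icc.mp hi).1
    have hr : 0 < 2 * (i:ℝ) * lam := by nlinarith
    have := Real.integral_rpow_mul_exp_neg_mul_Ioi (by linarith : (0:ℝ) < m+1) hr
    rw [add_sub_cancel_right] at this
    rw [← this]
    refine setIntegral_congr_fun measurableSet_Ioi (fun x hx => ?_)
    congr 1
    rw [← Real.exp_nat_mul]
    congr 1
    push_cast
    ring
  rw [Finset.prod_congr rfl key, Finset.prod_mul_distrib, Finset.prod_const,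
    Real.finset_prod_rpow _ _ (fun i hi => by positivity) _]
  have hprod : (∏ i ∈ Finset.Icc 1 n, (1 / (2 * (i:ℝ) * lam)))
      = 1 / ((2*lam)^n * (n.factorial : ℝ)) := by
    have hcast : (∏ i ∈ Finset.Icc 1 n, (i:ℝ)) = (n.factorial : ℝ) := by
      rw [← Nat.cast_prod]
      congr 1
      rw [← Finset.Ico_add_one_right_eq_Icc]
      exact Finset.prod_Ico_id_eq_factorial n
    have hstep : ∀ i ∈ Finset.Icc 1 n, (1:ℝ) / (2 * (i:ℝ) * lam)
        = (1/(2*lam)) * (1/(i:ℝ)) := by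
      intro i hi
      have h1 : 1 ≤ i := (Finset.mem_Icc.mp hi).1
      have hi0 : (i:ℝ) ≠ 0 := by positivity
      field_simp
    rw [Finset.prod_congr rfl hstep, Finset.prod_mul_distrib, Finset.prod_const,
      Finset.prod_div_distrib, Finset.prod_const_one, hcast]
    field_simp
    rw [Nat.card_Icc, Nat.add_sub_cancel, one_div, inv_pow, inv_mul_cancel₀ (pow_pos (by linarith : (0:ℝ) < 2*lam) n).ne']
  rw [hprod]
  have h2l : (0:ℝ) < 2 * lam := by linarith
  have hfac : (0:ℝ) < (n.factorial : ℝ) := by exact_mod_cast n.factorial_pos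
  rw [Real.div_rpow (by positivity) (by positivity), Real.one_rpow,
    Real.mul_rpow (by positivity) (by positivity)]
  rw [div_pow, ← Real.rpow_natCast ((2*lam)^(m+1)) n, ← Real.rpow_mul h2l.le,
    ← Real.rpow_natCast (2*lam) n, ← Real.rpow_mul h2l.le, mul_comm (m+1) (n:ℝ)]
  field_simp
  have hfx : (1/(n.factorial:ℝ)) ^ (m+1) * (n.factorial:ℝ) ^ (m+1) = 1 := by
    rw [← Real.mul_rpow (by positivity) hfac.le, one_div, inv_mul_cancel₀ hfac.ne', Real.one_rpow]
  rw [Nat.card_Icc, Nat.add_sub_cancel]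
  linear_combination (Real.Gamma (m+1) ^ n) * hfx
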